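/- Let F be a model of VFE which is nontrivially valued, and suppose that for every nonzero t in the maximal ideal M the map x ↦ σ(x) − t·x is surjective from F to F. Then F lies dense in its inversive hull; concretely, for every a ∈ F, every integer n ≥ 1, and every γ in the value group Γ, there exists b ∈ F with v(σ^n(b) − a) > γ. -/
import Mathlib


/-! STATEMENT 19: if `F` is a nontrivially valued model of VFE such that
`x ↦ σ(x) − t·x` is surjective for every nonzero `t` in the maximal ideal, then `F`
lies dense in its inversive hull: for every `a ∈ F`, `n ≥ 1`, and every `γ` in the
value group, there is `b ∈ F` with `v(σⁿ(b) − a) > γ` (multiplicatively: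
`v(σⁿ(b) − a) < γ` for every `γ = v c`, `c ≠ 0`, in the multiplicative value group). -/

/-- Closed under twists: every `σ x` has all `p`-power roots. -/
def ClosedUnderTwists (p : ℕ) {F : Type*} [Field F] (σ : F →+* F) : Prop :=
  ∀ (x : F) (n : ℕ), ∃ y : F, y ^ p ^ n = σ x

/-- `x` is separably algebraic over the subfield `A`. -/
def IsSepAlgElemOver {Ω : Type*} [Field Ω] (A : Subfield Ω) (x : Ω) : Prop :=
  ∃ f : Polynomial Ω, (∀ n, f.coeff n ∈ A) ∧ Polynomial.eval x f = 0 ∧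
    Polynomial.eval x (Polynomial.derivative f) ≠ 0

/-- A difference field `(F, σ)` of characteristic exponent `p` is a model of FF. -/
def IsFF (p : ℕ) {F : Type*} [Field F] (σ : F →+* F) : Prop :=
  ClosedUnderTwists p σ ∧
  ∀ x : F, IsSepAlgElemOver σ.fieldRange x → x ∈ σ.fieldRange

theorem statement19 {F : Type*} [Field F] {Γ : Type*}
    [LinearOrderedCommGroupWithZero Γ]
    (p : ℕ) [ExpChar F p] (v : Valuation F Γ) (σ : F →+* F)
    -- σ⁻¹(O) = O and σ⁻¹(M) = M (transformal valued field)
    (hO : ∀ x : F, v (σ x) ≤ 1 ↔ v x ≤ 1)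
    (hM : ∀ x : F, v (σ x) < 1 ↔ v x < 1)
    -- ω-increasing: nγ < σγ for all γ > 0 in the value group
    (hω : ∀ x : F, v x ≠ 0 → v x < 1 → ∀ n : ℕ, v (σ x) < v x ^ n)
    -- the underlying difference field is a model of FF
    (hFFF : IsFF p σ)
    -- equal characteristic
    [ExpChar (IsLocalRing.ResidueField ↥v.valuationSubring) p]
    -- the valuation is nontrivial
    (hnt : ∃ x : F, v x ≠ 0 ∧ v x ≠ 1)
    -- for every nonzero t in the maximal ideal, x ↦ σ(x) − t·x is surjective
    (hsurj : ∀ t : F, t ≠ 0 → v t < 1 →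
      Function.Surjective fun x : F => σ x - t * x) :
    -- F lies dense in its inversive hull: every γ = v c (c ≠ 0) in the value group
    -- can be exceeded
    ∀ (a : F) (n : ℕ), 1 ≤ n → ∀ c : F, c ≠ 0 →
      ∃ b : F, v ((⇑σ)^[n] b - a) < v c := by
  classical
  -- an element of small positive valuation
  obtain ⟨d, hdne, hdlt⟩ : ∃ d : F, v d ≠ 0 ∧ v d < 1 := by
    obtain ⟨d₀, hd0, hd1⟩ := hnt
    rcases lt_or_gt_of_ne hd1 with h | h
    · exact ⟨d₀, hd0, h⟩
    · refine ⟨d₀⁻¹, ?_, ?_⟩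
      · rw [map_inv₀]; exact inv_ne_zero hd0
      · rw [map_inv₀]; exact inv_lt_one_of_one_lt₀ h
  have hd0' : d ≠ 0 := v.ne_zero_iff.mp hdne
  -- the inverse form of ω-increasingness
  have hωinv : ∀ x : F, x ≠ 0 → 1 < v x → ∀ m : ℕ, v x ^ m < v (σ x) := by
    intro x hx h1 m
    have hvx : v x ≠ 0 := v.ne_zero_iff.mpr hx
    have hinv : v x⁻¹ ≠ 0 := by rw [map_inv₀]; exact inv_ne_zero hvx
    have h2 : v x⁻¹ < 1 := by rw [map_inv₀]; exact inv_lt_one_of_one_lt₀ h1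
    have := hω x⁻¹ hinv h2 m
    rw [map_inv₀ σ, map_inv₀ v, map_inv₀ v, inv_pow] at this
    have hσx : v (σ x) ≠ 0 := v.ne_zero_iff.mpr (map_ne_zero σ |>.mpr hx)
    have hpow : v x ^ m ≠ 0 := pow_ne_zero m hvx
    exact (inv_lt_inv₀ (zero_lt_iff.mpr hσx) (zero_lt_iff.mpr hpow)).mp this
  -- σ does not increase small valuations
  have hstep : ∀ y : F, v y < 1 → v (σ y) ≤ v y := by
    intro y hy
    rcases eq_or_ne y 0 with rfl | hy0
    · simp
    · exact le_of_lt (by simpa using hω y (v.ne_zero_iff.mpr hy0) hy 1)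
  have hshrink : ∀ (m : ℕ) (y : F), v y < 1 → v ((⇑σ)^[m] y) ≤ v y := by
    intro m
    induction m with
    | zero => intro y _; simp
    | succ k ih =>
        intro y hy
        rw [Function.iterate_succ_apply]
        exact (ih (σ y) ((hstep y hy).trans_lt hy)).trans (hstep y hy)
  -- the base case: approximating with a single σ
  have base : ∀ a c : F, c ≠ 0 → ∃ b : F, v (σ b - a) < v c ∧ v (σ b - a) < 1 := by
    intro a c hc
    -- replace c by something of valuation ≤ 1
    obtain ⟨c₂, hc₂ne, hc₂le1, hc₂lec⟩ : ∃ c₂ : F, c₂ ≠ 0 ∧ v c₂ ≤ 1 ∧ v c₂ ≤ v c := by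
      rcases le_or_gt (v c) 1 with h | h
      · exact ⟨c, hc, h, le_rfl⟩
      · exact ⟨1, one_ne_zero, by simp, by simpa using h.le⟩
    have hc₂pos : v c₂ ≠ 0 := v.ne_zero_iff.mpr hc₂ne
    -- find t with t ≠ 0, v t < 1 and v t * max 1 (v a) < v c₂
    obtain ⟨t, htne, htlt1, htkey⟩ :
        ∃ t : F, t ≠ 0 ∧ v t < 1 ∧ v t * max 1 (v a) < v c₂ := by
      obtain ⟨c', hc'ne, hc'mul⟩ :
          ∃ c' : F, c' ≠ 0 ∧ v c' * max 1 (v a) ≤ v c₂ := by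
        rcases le_or_gt (v a) 1 with h | h
        · exact ⟨c₂, hc₂ne, by rw [max_eq_left h, mul_one]⟩
        · have ha0 : a ≠ 0 := by
            intro h0; rw [h0, map_zero] at h; exact absurd h (by simp)
          refine ⟨c₂ / a, div_ne_zero hc₂ne ha0, ?_⟩
          rw [max_eq_right h.le, map_div₀]
          rw [div_mul_cancel₀]
          exact v.ne_zero_iff.mpr ha0
      have hc'pos : v c' ≠ 0 := v.ne_zero_iff.mpr hc'ne
      have hmaxpos : (0 : Γ) < max 1 (v a) := lt_of_lt_of_le zero_lt_one (le_max_left _ _)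
      rcases le_or_gt (v c') (v d) with h | h
      · refine ⟨c' * d, mul_ne_zero hc'ne hd0', ?_, ?_⟩
        · rw [v.map_mul]
          calc v c' * v d < v c' * 1 := by
                exact mul_lt_mul_of_pos_left (lt_of_lt_of_le hdlt le_rfl)
                  (zero_lt_iff.mpr hc'pos)
            _ = v c' := mul_one _
            _ ≤ v d := h
            _ < 1 := hdlt
        · rw [v.map_mul]
          have h1 : v c' * v d < v c' :=
            mul_lt_of_lt_one_right (zero_lt_iff.mpr hc'pos) hdlt
          calc v c' * v d * max 1 (v a) < v c' * max 1 (v a) :=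
                mul_lt_mul_of_pos_right h1 hmaxpos
            _ ≤ v c₂ := hc'mul
      · refine ⟨d * d, mul_ne_zero hd0' hd0', ?_, ?_⟩
        · rw [v.map_mul]
          exact lt_trans (mul_lt_of_lt_one_right (zero_lt_iff.mpr hdne) hdlt) hdlt
        · rw [v.map_mul]
          have h1 : v d * v d < v c' :=
            lt_trans (mul_lt_of_lt_one_right (zero_lt_iff.mpr hdne) hdlt) h
          calc v d * v d * max 1 (v a) < v c' * max 1 (v a) :=
                mul_lt_mul_of_pos_right h1 hmaxpos
            _ ≤ v c₂ := hc'mul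
    -- solve σ x - t x = a
    obtain ⟨x, hx⟩ := hsurj t htne htlt1 a
    simp only at hx
    have key : σ x - a = t * x := by rw [← hx]; ring
    have hval : v (σ x - a) = v t * v x := by rw [key, v.map_mul]
    have hbound : v t * v x < v c₂ := by
      rcases le_or_gt (v x) 1 with hx1 | hx1
      · calc v t * v x ≤ v t * max 1 (v a) :=
            mul_le_mul_right (le_trans hx1 (le_max_left _ _)) _
          _ < v c₂ := htkey
      · -- v x > 1 : show v x < v a
        have hxne : x ≠ 0 := by
          intro h0; rw [h0, map_zero] at hx1; exact absurd hx1 (by simp)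
        have hσeq : σ x = t * x + a := by rw [← key]; ring
        have hσle : v (σ x) ≤ max (v (t * x)) (v a) := hσeq ▸ v.map_add _ _
        have hgt : ∀ m : ℕ, v x ^ m < v (σ x) := hωinv x hxne hx1
        have hxva : v x < v a := by
          rcases le_or_gt (v a) (v (t * x)) with hcase | hcase
          · exfalso
            have h1 : v (σ x) ≤ v (t * x) := hσle.trans_eq (max_eq_left hcase)
            have h2 : v (t * x) < v x := by
              rw [v.map_mul]
              exact mul_lt_of_lt_one_left (zero_lt_iff.mpr (v.ne_zero_iff.mpr hxne)) htlt1
            have h3 : v x < v (σ x) := by simpa using hgt 1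
            exact absurd (h3.trans (h1.trans_lt h2)) (lt_irrefl _)
          · have h1 : v (σ x) ≤ v a := hσle.trans_eq (max_eq_right hcase.le)
            exact lt_of_lt_of_le (by simpa using hgt 1) h1
        calc v t * v x ≤ v t * max 1 (v a) :=
            mul_le_mul_right (le_trans hxva.le (le_max_right _ _)) _
          _ < v c₂ := htkey
    exact ⟨x, hval ▸ hbound.trans_le hc₂lec, hval ▸ hbound.trans_le hc₂le1⟩
  -- induct on n
  have main : ∀ n : ℕ, 1 ≤ n → ∀ a c : F, c ≠ 0 →
      ∃ b : F, v ((⇑σ)^[n] b - a) < v c ∧ v ((⇑σ)^[n] b - a) < 1 := by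
    intro n hn
    induction n, hn using Nat.le_induction with
    | base => intro a c hc; simpa using base a c hc
    | succ k hk ih =>
        intro a c hc
        obtain ⟨b', hb'c, hb'1⟩ := ih a c hc
        obtain ⟨b, hbc, hb1⟩ := base b' c hc
        have hrw : (⇑σ)^[k + 1] b - a = (⇑σ)^[k] (σ b - b') + ((⇑σ)^[k] b' - a) := by
          have hsub : (⇑σ)^[k] (σ b - b') = (⇑σ)^[k] (σ b) - (⇑σ)^[k] b' := by
            rw [← RingHom.coe_pow]; exact map_sub _ _ _
          rw [Function.iterate_succ_apply, hsub]; ring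
        have hle : v ((⇑σ)^[k + 1] b - a)
            ≤ max (v ((⇑σ)^[k] (σ b - b'))) (v ((⇑σ)^[k] b' - a)) := by
          rw [hrw]; exact v.map_add _ _
        refine ⟨b, ?_, ?_⟩
        · exact hle.trans_lt (max_lt ((hshrink k _ hb1).trans_lt hbc) hb'c)
        · exact hle.trans_lt (max_lt ((hshrink k _ hb1).trans_lt hb1) hb'1)
  intro a n hn c hc
  obtain ⟨b, hb, -⟩ := main n hn a c hc
  exact ⟨b, hb⟩
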